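/- Let λ' and q be positive integers, let a_1, …, a_{qλ'} be a sequence of elements of an arbitrary set S, and let x ∈ S. Let n_x = |{p : 1 ≤ p ≤ qλ', a_p = x}| be the number of appearances of x in the sequence. Let c_1, …, c_q be independent random variables where c_i is uniformly distributed on the i-th block {(i−1)λ'+1, …, iλ'}. Then for every real number R with R ≥ 6·n_x/λ', the probability that |{i : 1 ≤ i ≤ q, a_{c_i} = x}| ≥ R is at most 2^{−R}. -/

import Mathlib

open Finset

attribute [local instance] Classical.propDecidable

set_option maxHeartbeats 1000000

/-- blockwise sampling sees a fixed element few times. The positions are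
`1, …, q·λ'`; `c_i = (i−1)·λ' + s_i + 1` is a uniform point of the `i`-th block,
independently across blocks (uniform counting measure over `s : Fin q → Fin λ'`).
If `x` appears `n_x` times among `a_1, …, a_{qλ'}` then for every real `R ≥ 6·n_x/λ'`,
the probability that `x` is sampled at least `R` times is at most `2^{−R}`. -/
theorem statement_10 {S : Type} (lam q : ℕ) (hlam : 0 < lam) (hq : 0 < q)
    (a : ℕ → S) (x : S) (R : ℝ)
    (hR : 6 * (((Finset.Icc 1 (q * lam)).filter fun p => a p = x).card : ℝ) / (lam : ℝ) ≤ R) :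
    ((Finset.univ.filter fun s : Fin q → Fin lam =>
          R ≤ ((Finset.univ.filter fun i : Fin q =>
            a ((i : ℕ) * lam + (s i : ℕ) + 1) = x).card : ℝ)).card : ℝ)
        / (lam : ℝ) ^ q ≤ (2 : ℝ) ^ (-R) := by
  classical
  set n : ℕ := ((Finset.Icc 1 (q * lam)).filter fun p => a p = x).card with hn
  set k : Fin q → ℕ := fun i =>
    (Finset.univ.filter fun t : Fin lam => a ((i : ℕ) * lam + (t : ℕ) + 1) = x).card with hk
  set cnt : (Fin q → Fin lam) → ℕ := fun s =>
    (Finset.univ.filter fun i : Fin q => a ((i : ℕ) * lam + (s i : ℕ) + 1) = x).card with hcnt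
  set F : Finset (Fin q → Fin lam) :=
    Finset.univ.filter fun s => R ≤ (cnt s : ℝ) with hF
  have hlamR : (0 : ℝ) < lam := by exact_mod_cast hlam
  have hR0 : 0 ≤ R := le_trans (by positivity) hR
  -- sum of block counts is at most n
  have hkn : ∑ i, k i ≤ n := by
    have h1 : ∑ i, k i =
        (Finset.univ.filter fun p : Fin q × Fin lam =>
          a ((p.1 : ℕ) * lam + (p.2 : ℕ) + 1) = x).card := by
      rw [Finset.card_filter, Fintype.sum_prod_type]
      refine Finset.sum_congr rfl fun i _ => ?_
      simp only [hk]
      rw [Finset.card_filter]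
    rw [h1, hn]
    apply Finset.card_le_card_of_injOn (fun p => (p.1 : ℕ) * lam + (p.2 : ℕ) + 1)
    · intro p hp
      simp only [Finset.coe_filter, Set.mem_setOf_eq, Finset.mem_coe, Finset.mem_filter, Finset.mem_univ, true_and] at hp
      simp only [Finset.coe_filter, Set.mem_setOf_eq, Finset.mem_coe, Finset.mem_filter, Finset.mem_Icc]
      refine ⟨⟨by omega, ?_⟩, hp⟩
      have h2 : (p.2 : ℕ) + 1 ≤ lam := p.2.isLt
      have h1 : (p.1 : ℕ) + 1 ≤ q := p.1.isLt
      calc (p.1 : ℕ) * lam + (p.2 : ℕ) + 1 ≤ (p.1 : ℕ) * lam + lam := by omega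
        _ = ((p.1 : ℕ) + 1) * lam := by ring
        _ ≤ q * lam := Nat.mul_le_mul_right lam h1
    · intro p _ p' _ hEq
      simp only at hEq
      have key : ∀ i t : ℕ, t < lam → (i * lam + t) / lam = i := by
        intro i t h
        rw [mul_comm, Nat.mul_add_div hlam, Nat.div_eq_of_lt h, add_zero]
      have hEq' : (p.1 : ℕ) * lam + (p.2 : ℕ) = (p'.1 : ℕ) * lam + (p'.2 : ℕ) := by omega
      have h1 : (p.1 : ℕ) = (p'.1 : ℕ) := by
        have := congrArg (fun m => m / lam) hEq'
        simpa [key _ _ p.2.isLt, key _ _ p'.2.isLt] using this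
      have h2 : (p.2 : ℕ) = (p'.2 : ℕ) := by
        rw [h1] at hEq'; omega
      exact Prod.ext (Fin.ext h1) (Fin.ext h2)
  have hμ : 3 * (∑ i, (k i : ℝ)) / lam ≤ R / 2 := by
    have hcast : (∑ i, (k i : ℝ)) ≤ (n : ℝ) := by exact_mod_cast hkn
    have h6 : 6 * (∑ i, (k i : ℝ)) / lam ≤ 6 * (n : ℝ) / lam := by gcongr
    have heq : 3 * (∑ i, (k i : ℝ)) / lam = (6 * (∑ i, (k i : ℝ)) / lam) / 2 := by ring
    linarith
  -- MGF identity
  have hMGF : ∑ s : Fin q → Fin lam, (4 : ℝ) ^ (cnt s) = ∏ i, ((lam : ℝ) + 3 * k i) := by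
    have hsplit : ∀ s : Fin q → Fin lam, (4 : ℝ) ^ (cnt s) =
        ∏ i : Fin q, (if a ((i : ℕ) * lam + (s i : ℕ) + 1) = x then (4 : ℝ) else 1) := by
      intro s
      simp only [hcnt]
      rw [Finset.card_filter, ← Finset.prod_pow_eq_pow_sum]
      apply Finset.prod_congr rfl
      intro i _
      split <;> simp
    calc ∑ s : Fin q → Fin lam, (4 : ℝ) ^ (cnt s)
        = ∑ s ∈ Fintype.piFinset (fun _ : Fin q => (Finset.univ : Finset (Fin lam))),
            ∏ i : Fin q, (if a ((i : ℕ) * lam + (s i : ℕ) + 1) = x then (4 : ℝ) else 1) := by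
          rw [Fintype.piFinset_univ]
          exact Finset.sum_congr rfl fun s _ => hsplit s
      _ = ∏ i : Fin q, ∑ t : Fin lam,
            (if a ((i : ℕ) * lam + (t : ℕ) + 1) = x then (4 : ℝ) else 1) := by
          exact (Finset.prod_univ_sum (fun _ : Fin q => (Finset.univ : Finset (Fin lam)))
            (fun i t => if a ((i : ℕ) * lam + (t : ℕ) + 1) = x then (4 : ℝ) else 1)).symm
      _ = ∏ i, ((lam : ℝ) + 3 * k i) := by
          apply Finset.prod_congr rfl
          intro i _
          have hterm : ∀ t : Fin lam,
              (if a ((i : ℕ) * lam + (t : ℕ) + 1) = x then (4 : ℝ) else 1) =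
              3 * (if a ((i : ℕ) * lam + (t : ℕ) + 1) = x then (1 : ℝ) else 0) + 1 := by
            intro t; split <;> norm_num
          rw [Finset.sum_congr rfl fun t _ => hterm t, Finset.sum_add_distrib,
            Finset.sum_const, ← Finset.mul_sum, Finset.sum_boole]
          simp [hk]
          ring
  -- product bound via exp
  have hprod : ∏ i, ((lam : ℝ) + 3 * k i) ≤
      (lam : ℝ) ^ q * Real.exp (3 * (∑ i, (k i : ℝ)) / lam) := by
    have hfac : ∀ i, (lam : ℝ) + 3 * k i ≤ (lam : ℝ) * Real.exp (3 * (k i : ℝ) / lam) := by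
      intro i
      have h := Real.add_one_le_exp (3 * (k i : ℝ) / lam)
      calc (lam : ℝ) + 3 * k i = lam * (3 * (k i : ℝ) / lam + 1) := by field_simp; ring
        _ ≤ lam * Real.exp (3 * (k i : ℝ) / lam) :=
            mul_le_mul_of_nonneg_left h hlamR.le
    calc ∏ i, ((lam : ℝ) + 3 * k i)
        ≤ ∏ i, ((lam : ℝ) * Real.exp (3 * (k i : ℝ) / lam)) :=
          Finset.prod_le_prod (fun i _ => by positivity) (fun i _ => hfac i)
      _ = (lam : ℝ) ^ q * Real.exp (3 * (∑ i, (k i : ℝ)) / lam) := by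
          rw [Finset.prod_mul_distrib, Finset.prod_const, ← Real.exp_sum]
          congr 1
          · simp
          · congr 1
            rw [Finset.mul_sum, Finset.sum_div]
  -- counting bound
  have hcard : (F.card : ℝ) * (4 : ℝ) ^ R ≤ ∑ s : Fin q → Fin lam, (4 : ℝ) ^ (cnt s) := by
    have h1 : (F.card : ℝ) * (4 : ℝ) ^ R = ∑ _s ∈ F, (4 : ℝ) ^ R := by
      rw [Finset.sum_const, nsmul_eq_mul]
    rw [h1]
    have h2 : ∑ s ∈ F, (4 : ℝ) ^ R ≤ ∑ s ∈ F, (4 : ℝ) ^ (cnt s) := by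
      apply Finset.sum_le_sum
      intro s hs
      have hsR : R ≤ (cnt s : ℝ) := by
        simp only [hF, Finset.mem_filter] at hs
        exact hs.2
      calc (4 : ℝ) ^ R ≤ (4 : ℝ) ^ ((cnt s : ℝ)) :=
            Real.rpow_le_rpow_of_exponent_le (by norm_num) hsR
        _ = (4 : ℝ) ^ (cnt s) := Real.rpow_natCast 4 (cnt s)
    refine le_trans h2 (Finset.sum_le_sum_of_subset_of_nonneg (Finset.subset_univ F) ?_)
    intro s _ _; positivity
  -- combine
  have hmain : (F.card : ℝ) * (4 : ℝ) ^ R ≤ (lam : ℝ) ^ q * Real.exp (R / 2) := by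
    calc (F.card : ℝ) * (4 : ℝ) ^ R ≤ ∑ s : Fin q → Fin lam, (4 : ℝ) ^ (cnt s) := hcard
      _ = ∏ i, ((lam : ℝ) + 3 * k i) := hMGF
      _ ≤ (lam : ℝ) ^ q * Real.exp (3 * (∑ i, (k i : ℝ)) / lam) := hprod
      _ ≤ (lam : ℝ) ^ q * Real.exp (R / 2) := by
          apply mul_le_mul_of_nonneg_left (Real.exp_le_exp.2 hμ) (by positivity)
  have hlamq : (0 : ℝ) < (lam : ℝ) ^ q := by positivity
  have h4R : (0 : ℝ) < (4 : ℝ) ^ R := Real.rpow_pos_of_pos (by norm_num) R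
  rw [div_le_iff₀ hlamq]
  -- F.card ≤ lam^q * exp(R/2) / 4^R ≤ lam^q * 2^{-R}
  have hkey : Real.exp (R / 2) ≤ (2 : ℝ) ^ (-R) * (4 : ℝ) ^ R := by
    have hhalf : Real.exp (1 / 2) ≤ 2 := by
      have h2 : Real.exp (1 / 2) * Real.exp (1 / 2) = Real.exp 1 := by
        rw [← Real.exp_add]; norm_num
      nlinarith [Real.exp_one_lt_d9, Real.exp_pos (1 / 2)]
    have hexp : Real.exp (R / 2) = (Real.exp (1 / 2)) ^ R := by
      rw [← Real.exp_one_rpow (1 / 2), ← Real.rpow_mul (Real.exp_pos 1).le,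
        Real.exp_one_rpow]
      ring_nf
    have h1 : (Real.exp (1 / 2)) ^ R ≤ (2 : ℝ) ^ R :=
      Real.rpow_le_rpow (Real.exp_pos _).le hhalf hR0
    have h2 : (2 : ℝ) ^ R = (2 : ℝ) ^ (-R) * (4 : ℝ) ^ R := by
      have h4 : (4 : ℝ) ^ R = ((2 : ℝ) ^ (2 : ℝ)) ^ R := by norm_num
      rw [h4, ← Real.rpow_mul (by norm_num : (0:ℝ) ≤ 2), ← Real.rpow_add (by norm_num : (0:ℝ) < 2)]
      ring_nf
    rw [hexp, ← h2]; exact h1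
  calc (F.card : ℝ) ≤ (lam : ℝ) ^ q * Real.exp (R / 2) / (4 : ℝ) ^ R := by
        rw [le_div_iff₀ h4R]; exact hmain
    _ ≤ (lam : ℝ) ^ q * ((2 : ℝ) ^ (-R) * (4 : ℝ) ^ R) / (4 : ℝ) ^ R := by
        gcongr
    _ = (2 : ℝ) ^ (-R) * (lam : ℝ) ^ q := by field_simp
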